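/- Let 0 < α ≤ 1/2 and x > 1. The sequence z₀ = x, z_{k+1} = ((1−α)z_k − 1/z_k)/α + x + 1 has differences satisfying (z_{k+1} − z_k)/(z_k − z_{k−1}) = (1 − α + 1/(z_k z_{k−1}))/α ≥ (1−α)/α ≥ 1 whenever z_k, z_{k−1} ≥ 1, and consequently z_k → ∞ as k → ∞. -/

import Mathlib

/-- for 0 < α ≤ 1/2 and x > 1, the sequence with z₋₁ = 1
(encoded as z 0 = 1; then z 1 = x follows from the conservation-law recursion)
has ratio of successive differences (1 − α + 1/(z_k z_{k−1}))/α ≥ (1−α)/α ≥ 1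
whenever z_k, z_{k−1} ≥ 1, and z_k → ∞. -/
theorem stmt8 (α x : ℝ) (hα : 0 < α) (hα1 : α ≤ 1/2) (hx : 1 < x)
    (z : ℕ → ℝ) (hz0 : z 0 = 1)
    (hrec : ∀ k, z (k+1) = ((1-α)*z k - 1/(z k))/α + x + 1) :
    (∀ k, 1 ≤ z k → 1 ≤ z (k+1) →
      (z (k+2) - z (k+1)) / (z (k+1) - z k) = (1 - α + 1/(z (k+1) * z k))/α ∧
      (1-α)/α ≤ (1 - α + 1/(z (k+1) * z k))/α ∧
      1 ≤ (1-α)/α) ∧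
    Filter.Tendsto z Filter.atTop Filter.atTop := by
  have hαne : α ≠ 0 := ne_of_gt hα
  have hone : (1:ℝ) ≤ (1-α)/α := by
    rw [le_div_iff₀ hα]; linarith
  have key : ∀ k, z k ≠ 0 → z (k+1) ≠ 0 →
      z (k+2) - z (k+1) = (z (k+1) - z k) * ((1 - α + 1/(z (k+1) * z k))/α) := by
    intro k h0 h1
    have e3 : z (k+2) - z (k+1)
        = ((1-α)*z (k+1) - 1/(z (k+1)))/α - ((1-α)*z k - 1/(z k))/α := by
      have e1 := hrec k
      have e2 := hrec (k+1)
      linarith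
    rw [e3]
    field_simp
    ring
  have hz1 : z 1 = x := by
    rw [hrec 0, hz0]
    field_simp
    ring
  have aux : ∀ k, 1 ≤ z k ∧ x - 1 ≤ z (k+1) - z k := by
    intro k
    induction k with
    | zero =>
      refine ⟨le_of_eq hz0.symm, ?_⟩
      rw [hz1, hz0]
    | succ n ih =>
      obtain ⟨h1, h2⟩ := ih
      have h1' : 1 ≤ z (n+1) := by linarith
      have hp0 : (0:ℝ) < z n := by linarith
      have hp1 : (0:ℝ) < z (n+1) := by linarith
      have hc : 1 ≤ (1 - α + 1/(z (n+1) * z n))/α := by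
        have hpos : 0 < 1/(z (n+1) * z n) := by positivity
        rw [le_div_iff₀ hα]; linarith
      have hk := key n (ne_of_gt hp0) (ne_of_gt hp1)
      refine ⟨h1', ?_⟩
      rw [hk]
      have hd : 0 < z (n+1) - z n := by linarith
      calc x - 1 ≤ z (n+1) - z n := h2
        _ = (z (n+1) - z n) * 1 := by ring
        _ ≤ (z (n+1) - z n) * ((1 - α + 1/(z (n+1) * z n))/α) := by
            exact mul_le_mul_of_nonneg_left hc hd.le
  constructor
  · intro k hk hk1
    have hp0 : (0:ℝ) < z k := by linarith
    have hp1 : (0:ℝ) < z (k+1) := by linarith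
    have hd : 0 < z (k+1) - z k := by have := (aux k).2; linarith
    have hpos : 0 < 1/(z (k+1) * z k) := by positivity
    refine ⟨?_, ?_, hone⟩
    · rw [key k (ne_of_gt hp0) (ne_of_gt hp1), mul_comm,
        mul_div_assoc, div_self (ne_of_gt hd), mul_one]
    · gcongr
      linarith
  · have grow : ∀ k : ℕ, 1 + (k : ℝ) * (x - 1) ≤ z k := by
      intro k
      induction k with
      | zero => simp [hz0]
      | succ n ih =>
        have h2 := (aux n).2
        push_cast
        nlinarith
    apply Filter.tendsto_atTop_mono grow
    apply Filter.tendsto_atTop_add_const_left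
    exact Filter.Tendsto.atTop_mul_const (by linarith) tendsto_natCast_atTop_atTop
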